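/- Let A be a unital C*-algebra and K ⊆ A a metric set (norm compact, convex, balanced, and separating the states of A), and set d_K(φ,ψ) = sup_{k∈K} |φ(k) − ψ(k)| for states φ, ψ. Let H ⊆ A be norm bounded and suppose that for every ε > 0 there exists N > 0 with H ⊆ A_ε + N·K + ℂ·1 (where A_ε is the closed ε-ball of A). Then the family H is uniformly equicontinuous on the state space with respect to d_K: for every ε > 0 there exists δ > 0 such that for all h ∈ H and all states φ, ψ with d_K(φ,ψ) < δ one has |φ(h) − ψ(h)| ≤ ε. -/

import Mathlib

open scoped Pointwise

/-- A state on a unital C*-algebra: a continuous linear functional with `φ(1) = 1` and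
`φ(a*a)` real and nonnegative for every `a`. -/
def IsStateCLM {A : Type*} [NormedRing A] [NormedAlgebra ℂ A] [StarRing A]
    (φ : A →L[ℂ] ℂ) : Prop :=
  φ 1 = 1 ∧ ∀ a : A, 0 ≤ (φ (star a * a)).re ∧ (φ (star a * a)).im = 0

section Aux

variable {A : Type*} [NormedRing A] [StarRing A] [CStarRing A] [CompleteSpace A]
    [NormedAlgebra ℂ A] [StarModule ℂ A]

/-- A state has norm at most one. -/
lemma IsStateCLM.abs_apply_le_norm {φ : A →L[ℂ] ℂ} (hφ : IsStateCLM φ) (a : A) :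
    ‖φ a‖ ≤ ‖a‖ := by
  letI : CStarAlgebra A :=
    { ‹NormedRing A›, ‹StarRing A›, ‹CompleteSpace A›, ‹CStarRing A›,
      ‹NormedAlgebra ℂ A›, ‹StarModule ℂ A› with }
  letI := CStarAlgebra.spectralOrder A
  haveI := CStarAlgebra.spectralOrderedRing A
  -- positivity of φ on nonnegative elements
  have key : ∀ x : A, 0 ≤ x → 0 ≤ (φ x).re ∧ (φ x).im = 0 := by
    intro x hx
    have h : x = star (CFC.sqrt x) * CFC.sqrt x := by
      rw [(IsSelfAdjoint.of_nonneg (CFC.sqrt_nonneg x)).star_eq, CFC.sqrt_mul_sqrt_self x hx]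
    rw [h]; exact hφ.2 _
  have halg : ∀ r : ℝ, φ (algebraMap ℝ A r) = (r : ℂ) := by
    intro r
    rw [IsScalarTower.algebraMap_apply ℝ ℂ A, Algebra.algebraMap_eq_smul_one, map_smul,
      hφ.1, smul_eq_mul, mul_one, Complex.coe_algebraMap]
  -- φ is real on selfadjoint elements
  have him : ∀ h : A, IsSelfAdjoint h → (φ h).im = 0 := by
    intro h hh
    have hd : h⁺ - h⁻ = h := CFC.posPart_sub_negPart h hh
    have h1 := (key _ (CFC.posPart_nonneg h)).2
    have h2 := (key _ (CFC.negPart_nonneg h)).2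
    rw [← hd, map_sub, Complex.sub_im, h1, h2, sub_zero]
  have hrle : ∀ h : A, IsSelfAdjoint h → (φ h).re ≤ ‖h‖ := by
    intro h hh
    have h1 : (0 : A) ≤ algebraMap ℝ A ‖h‖ - h := sub_nonneg.mpr hh.le_algebraMap_norm_self
    have h2 := (key _ h1).1
    rw [map_sub, halg] at h2
    simpa using h2
  rcases eq_or_ne (φ a) 0 with h0 | h0
  · simp [h0]
  set lam : ℂ := (starRingEnd ℂ) (φ a) / ‖φ a‖ with hlam
  have habs : ‖lam‖ = 1 := by
    simp [hlam, Complex.norm_conj, div_self, norm_ne_zero_iff.mpr h0]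
  set b : A := lam • a with hb
  have hφb : φ b = (‖φ a‖ : ℂ) := by
    have hne : (‖φ a‖ : ℂ) ≠ 0 := by
      exact_mod_cast norm_ne_zero_iff.mpr h0
    have hcm : (starRingEnd ℂ) (φ a) * φ a = ((‖φ a‖ : ℝ) : ℂ) ^ 2 := by
      rw [mul_comm, Complex.mul_conj]
      norm_cast
      exact (Complex.sq_norm _).symm
    rw [hb, map_smul, hlam, smul_eq_mul, div_mul_eq_mul_div, hcm, sq, mul_div_assoc,
      div_self hne, mul_one]
  -- decompose b into self-adjoint parts
  obtain ⟨hpart, hhp⟩ : ∃ hp : A, hp = (1/2 : ℂ) • (b + star b) := ⟨_, rfl⟩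
  obtain ⟨kpart, hkp⟩ : ∃ kp : A, kp = (-Complex.I / 2 : ℂ) • (b - star b) := ⟨_, rfl⟩
  have hpsa : IsSelfAdjoint hpart := by
    rw [hhp, IsSelfAdjoint, star_smul, star_add, star_star]
    simp [add_comm]
  have hksa : IsSelfAdjoint kpart := by
    rw [hkp, IsSelfAdjoint, star_smul, star_sub, star_star]
    rw [show star (-Complex.I / 2 : ℂ) = Complex.I / 2 by
      simp [Complex.ext_iff]]
    rw [show (Complex.I / 2) • (star b - b) = (-Complex.I / 2 : ℂ) • (b - star b) by
      rw [neg_div, neg_smul, ← smul_neg, neg_sub]]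
  have hbdecomp : b = hpart + Complex.I • kpart := by
    rw [hhp, hkp, smul_smul]
    rw [show Complex.I * (-Complex.I / 2) = 1/2 by
      rw [mul_comm, div_mul_eq_mul_div, neg_mul, Complex.I_mul_I, neg_neg]]
    rw [← smul_add]
    rw [show b + star b + (b - star b) = (2 : ℂ) • b by
      rw [two_smul]; abel]
    rw [smul_smul]; norm_num
  have hre : (‖φ a‖ : ℝ) = (φ hpart).re := by
    have heq := congrArg φ hbdecomp
    rw [hφb, map_add, map_smul] at heq
    have him' := him kpart hksa
    have h2 := congrArg Complex.re heq
    rw [Complex.add_re, Complex.ofReal_re] at h2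
    rw [h2, smul_eq_mul, Complex.mul_re, Complex.I_re, Complex.I_im, him']
    ring
  have hnorm : ‖hpart‖ ≤ ‖a‖ := by
    calc ‖hpart‖ ≤ ‖(1/2 : ℂ)‖ * (‖b‖ + ‖star b‖) := by
          rw [hhp, norm_smul]
          gcongr
          exact norm_add_le _ _
      _ = ‖b‖ := by rw [norm_star]; simp; ring
      _ = ‖a‖ := by rw [hb, norm_smul, show ‖lam‖ = 1 from habs, one_mul]
  calc ‖φ a‖ = (φ hpart).re := hre
    _ ≤ ‖hpart‖ := hrle hpart hpsa
    _ ≤ ‖a‖ := hnorm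

end Aux

/-- Let `K` be a metric set in a unital C*-algebra `A` and let
`d_K(φ,ψ) = sup_{k ∈ K} |φ(k) − ψ(k)|`. If `H ⊆ A` is norm bounded and for every `ε > 0`
there is `N > 0` with `H ⊆ A_ε + N·K + ℂ·1`, then the family `H` is uniformly
equicontinuous on the state space with respect to `d_K`. -/
theorem equicontinuous_of_approximation_by_metric_set
    (A : Type*) [NormedRing A] [StarRing A] [CStarRing A] [CompleteSpace A]
    [NormedAlgebra ℂ A] [StarModule ℂ A]
    (K : Set A) (hKcpt : IsCompact K) (hKconv : Convex ℝ K) (hKbal : Balanced ℂ K)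
    (hKsep : ∀ φ ψ : A →L[ℂ] ℂ, IsStateCLM φ → IsStateCLM ψ →
      (∀ k ∈ K, φ k = ψ k) → φ = ψ)
    (H : Set A) (hHbdd : Bornology.IsBounded H)
    (hHincl : ∀ ε : ℝ, 0 < ε → ∃ N : ℝ, 0 < N ∧
      H ⊆ Metric.closedBall (0 : A) ε + (N : ℂ) • K +
        Set.range (fun μ : ℂ => μ • (1 : A))) :
    ∀ ε : ℝ, 0 < ε → ∃ δ : ℝ, 0 < δ ∧
      ∀ h ∈ H, ∀ φ ψ : A →L[ℂ] ℂ, IsStateCLM φ → IsStateCLM ψ →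
        (⨆ k : K, ‖φ (k : A) - ψ (k : A)‖) < δ →
        ‖φ h - ψ h‖ ≤ ε := by
  intro ε hε
  obtain ⟨N, hN, hincl⟩ := hHincl (ε / 4) (by linarith)
  refine ⟨ε / (2 * N), by positivity, ?_⟩
  intro h hh φ ψ hφ hψ hsup
  obtain ⟨C, hC⟩ := hKcpt.isBounded.subset_closedBall 0
  obtain ⟨x, hx, y, hy, hxy⟩ := hincl hh
  obtain ⟨a, ha, nk, hnk, hank⟩ := hx
  obtain ⟨k, hk, rfl⟩ := hnk
  obtain ⟨μ, rfl⟩ := hy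
  have hkK : ∀ k' ∈ K, ‖φ k' - ψ k'‖ ≤ ε / (2 * N) := by
    intro k' hk'
    refine le_of_lt (lt_of_le_of_lt ?_ hsup)
    have hbdd : BddAbove (Set.range fun k : K => ‖φ (k : A) - ψ (k : A)‖) := by
      refine ⟨2 * C, ?_⟩
      rintro _ ⟨⟨k'', hk''⟩, rfl⟩
      have h1 : ‖φ k'' - ψ k''‖ ≤ ‖k''‖ + ‖k''‖ := by
        calc ‖φ k'' - ψ k''‖
            = ‖φ k'' - ψ k''‖ := rfl
          _ ≤ ‖φ k''‖ + ‖ψ k''‖ := norm_sub_le _ _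
          _ = ‖φ k''‖ + ‖ψ k''‖ := rfl
          _ ≤ ‖k''‖ + ‖k''‖ := add_le_add (hφ.abs_apply_le_norm _) (hψ.abs_apply_le_norm _)
      have h2 : ‖k''‖ ≤ C := by simpa using hC hk''
      simp only at h1 ⊢
      linarith
    exact le_ciSup hbdd ⟨k', hk'⟩
  have hdiff : φ h - ψ h = (φ a - ψ a) + (N : ℂ) * (φ k - ψ k) := by
    have : h = a + (N : ℂ) • k + μ • 1 := by rw [← hxy, ← hank]
    rw [this]
    simp only [map_add, map_smul, hφ.1, hψ.1, smul_eq_mul]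
    ring
  have hna : ‖a‖ ≤ ε / 4 := by simpa using ha
  have h1 : ‖φ a - ψ a‖ ≤ ε / 2 := by
    calc ‖φ a - ψ a‖
        = ‖φ a - ψ a‖ := rfl
      _ ≤ ‖φ a‖ + ‖ψ a‖ := norm_sub_le _ _
      _ = ‖φ a‖ + ‖ψ a‖ := rfl
      _ ≤ ‖a‖ + ‖a‖ := add_le_add (hφ.abs_apply_le_norm _) (hψ.abs_apply_le_norm _)
      _ ≤ ε / 2 := by linarith
  have h2 : ‖(N : ℂ) * (φ k - ψ k)‖ ≤ ε / 2 := by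
    rw [norm_mul]
    have : ‖(N : ℂ)‖ = N := by
      simp [abs_of_pos hN]
    rw [this]
    calc N * ‖φ k - ψ k‖ ≤ N * (ε / (2 * N)) := by
          exact mul_le_mul_of_nonneg_left (hkK k hk) hN.le
      _ = ε / 2 := by field_simp
  calc ‖φ h - ψ h‖
      ≤ ‖φ a - ψ a‖ + ‖(N : ℂ) * (φ k - ψ k)‖ := by
        rw [hdiff]; exact norm_add_le _ _
    _ ≤ ε / 2 + ε / 2 := add_le_add h1 h2
    _ = ε := by ring
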